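/- arXiv:2402.07853 — 3 statements merged into one kernel-verified Lean document; each statement's English description precedes it below -/
import Mathlib

section
/- For positive integers a ≥ 2 and d, k ≥ 1 with gcd(a, d) = 1, the Frobenius number of the arithmetic progression a, a+d, a+2d, ..., a+kd equals a·⌊(a−2)/k⌋ + d(a−1). -/
theorem sum_one_point (k : ℕ) (j : Fin (k+1)) (v : ℕ) (h : Fin (k+1) → ℕ) :
    ∑ i, (if i = j then v else 0) * h i = v * h j := by
  simp [ite_mul, Finset.sum_ite_eq]

-- representability construction
theorem rep_of (a d k m t : ℕ) (hk : 1 ≤ k) (ht : t ≤ k * m) :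
    ∃ c : Fin (k+1) → ℕ, m * a + t * d = ∑ i, c i * (a + (i : ℕ) * d) := by
  have hkpos : 0 < k := hk
  obtain ⟨q, r, hr, ht'⟩ : ∃ q r, r < k ∧ t = k * q + r :=
    ⟨t / k, t % k, Nat.mod_lt _ hkpos, by have := Nat.div_add_mod t k; omega⟩
  subst ht'
  by_cases h0 : r = 0
  · subst h0
    have hq : q ≤ m := by
      refine Nat.le_of_mul_le_mul_left ?_ hkpos; omega
    obtain ⟨m', rfl⟩ := Nat.exists_eq_add_of_le hq
    refine ⟨fun i => (if i = ⟨k, by omega⟩ then q else 0) +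
      (if i = ⟨0, by omega⟩ then m' else 0), ?_⟩
    simp only [add_mul, Finset.sum_add_distrib, sum_one_point]
    ring
  · have hq : q + 1 ≤ m := by
      have : k * q < k * m := by omega
      exact Nat.lt_of_mul_lt_mul_left this
    obtain ⟨m', rfl⟩ := Nat.exists_eq_add_of_le hq
    refine ⟨fun i => (if i = ⟨k, by omega⟩ then q else 0) +
      ((if i = ⟨r, by omega⟩ then 1 else 0) +
      (if i = ⟨0, by omega⟩ then m' else 0)), ?_⟩
    simp only [add_mul, Finset.sum_add_distrib, sum_one_point]
    ring


theorem decomp (a d k : ℕ) (c : Fin (k+1) → ℕ) :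
    ∑ i, c i * (a + (i : ℕ) * d) = (∑ i, c i) * a + (∑ i, c i * (i : ℕ)) * d ∧
    (∑ i, c i * (i : ℕ)) ≤ k * (∑ i, c i) := by
  constructor
  · rw [Finset.sum_mul, Finset.sum_mul, ← Finset.sum_add_distrib]
    apply Finset.sum_congr rfl
    intro i _
    ring
  · rw [Finset.mul_sum]
    apply Finset.sum_le_sum
    intro i _
    calc c i * (i : ℕ) ≤ c i * k := Nat.mul_le_mul_left _ (Fin.is_le i)
    _ = k * c i := Nat.mul_comm _ _


-- Part 1 core: F is not of the form m*a + t*d with t ≤ k*m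
theorem part1core (a d k m t : ℕ) (ha : 2 ≤ a) (hd : 1 ≤ d) (hk : 1 ≤ k)
    (had : Nat.gcd a d = 1) (ht : t ≤ k * m)
    (he : a * ((a - 2) / k) + d * (a - 1) = m * a + t * d) : False := by
  set q := (a - 2) / k with hq
  -- add d to both sides: a*(q+d) = m*a + (t+1)*d
  have e2 : a * (q + d) = m * a + (t + 1) * d := by
    have : d * (a - 1) + d = d * a := by
      have : a - 1 + 1 = a := by omega
      rw [← Nat.mul_succ]; rw [Nat.succ_eq_add_one, this]
    have hcomm : a * d = d * a := mul_comm a d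
    calc a * (q + d) = a * q + d * (a-1) + d := by rw [Nat.mul_add]; omega
    _ = m * a + t * d + d := by rw [he]
    _ = m * a + (t + 1) * d := by ring
  have hdvd1 : a ∣ m * a + (t + 1) * d := ⟨q + d, e2.symm⟩
  have hdvd2 : a ∣ (t + 1) * d := (Nat.dvd_add_right ⟨m, (mul_comm m a)⟩).mp hdvd1
  have hdvd3 : a ∣ t + 1 := (Nat.Coprime.dvd_of_dvd_mul_right had hdvd2)
  obtain ⟨s, hs⟩ := hdvd3
  have hspos : 1 ≤ s := by nlinarith
  -- cancel a: q + d = m + s*d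
  have e3 : q + d = m + s * d := by
    have : a * (q + d) = a * (m + s * d) := by
      rw [e2, hs]; ring
    exact Nat.eq_of_mul_eq_mul_left (by omega) this
  have hds : d ≤ s * d := Nat.le_mul_of_pos_left d hspos
  have hmq : m ≤ q := by omega
  have h1 : k * m ≤ k * q := Nat.mul_le_mul_left k hmq
  have h2 : q * k ≤ a - 2 := Nat.div_mul_le_self (a - 2) k
  have h3 : a ≤ a * s := Nat.le_mul_of_pos_right a hspos
  have : k * q = q * k := mul_comm _ _
  omega


theorem part2core (a d k N : ℕ) (ha : 2 ≤ a) (hd : 1 ≤ d) (hk : 1 ≤ k)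
    (had : Nat.gcd a d = 1)
    (hN : a * ((a - 2) / k) + d * (a - 1) < N) :
    ∃ m t : ℕ, t ≤ k * m ∧ N = m * a + t * d := by
  haveI : NeZero a := ⟨by omega⟩
  set q := (a - 2) / k with hq
  -- find t < a with t*d ≡ N (mod a)
  have hunit : IsUnit (d : ZMod a) := by
    rw [ZMod.isUnit_iff_coprime]
    exact (Nat.coprime_comm.mp had)
  obtain ⟨t, htlt, hmod⟩ : ∃ t, t < a ∧ t * d ≡ N [MOD a] := by
    refine ⟨((N : ZMod a) * (d : ZMod a)⁻¹).val, ZMod.val_lt _, ?_⟩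
    rw [← ZMod.natCast_eq_natCast_iff]
    push_cast
    rw [ZMod.natCast_val, ZMod.cast_id]
    rw [mul_assoc, ZMod.inv_mul_of_unit _ hunit, mul_one]
  by_cases ht0 : t = 0
  · -- a ∣ N
    have : a ∣ N := by
      have := hmod
      rw [ht0, zero_mul] at this
      exact (Nat.modEq_zero_iff_dvd.mp this.symm)
    obtain ⟨m, rfl⟩ := this
    exact ⟨m, 0, by omega, by ring⟩
  · obtain ⟨t', rfl⟩ : ∃ t', t = t' + 1 := ⟨t - 1, by omega⟩
    set L := (t' + 1) * d + a * (t' / k + 1) with hL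
    have hLmod : L % a = ((t' + 1) * d) % a := Nat.add_mul_mod_self_left _ _ _
    -- L ≤ F + a
    have hLle : L ≤ a * q + d * (a - 1) + a := by
      have h1 : (t' + 1) * d ≤ (a - 1) * d := Nat.mul_le_mul_right d (by omega)
      have h2 : t' / k ≤ q := by
        rw [hq]; exact Nat.div_le_div_right (by omega)
      have h3 : a * (t' / k + 1) ≤ a * (q + 1) := Nat.mul_le_mul_left a (by omega)
      have h4 : (a - 1) * d = d * (a - 1) := mul_comm _ _
      have h5 : a * (q + 1) = a * q + a := by ring
      omega
    -- N ≥ L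
    have hNL : L ≤ N := by
      by_contra hcon
      push_neg at hcon
      have hml : N ≡ L [MOD a] := by
        unfold Nat.ModEq
        rw [hLmod]
        exact hmod.symm
      have hdvd : a ∣ L - N := (Nat.modEq_iff_dvd' hcon.le).mp hml
      have : a ≤ L - N := Nat.le_of_dvd (by omega) hdvd
      omega
    -- extract m
    have htd : (t' + 1) * d ≤ N := le_trans (by omega) hNL
    have hdvd : a ∣ N - (t' + 1) * d := (Nat.modEq_iff_dvd' htd).mp hmod
    obtain ⟨m, hm⟩ := hdvd
    have hcm : a * m = m * a := mul_comm a m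
    refine ⟨m, t' + 1, ?_, by omega⟩
    -- t'+1 ≤ k*m
    have hmge : t' / k + 1 ≤ m := by
      have : a * (t' / k + 1) ≤ a * m := by omega
      exact Nat.le_of_mul_le_mul_left this (by omega)
    have h6 : k * (t' / k + 1) ≤ k * m := Nat.mul_le_mul_left k hmge
    have h7 : k * (t' / k + 1) = k * (t' / k) + k := by ring
    have h8 := Nat.div_add_mod t' k
    have h9 : t' % k < k := Nat.mod_lt _ (by omega)
    omega

/-- The Frobenius number of the arithmetic progression
`a, a+d, ..., a+kd` (with `gcd(a,d)=1`) equals `a*⌊(a-2)/k⌋ + d*(a-1)`. -/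
theorem frobenius_arithmetic_progression (a d k : ℕ) (ha : 2 ≤ a)
    (hd : 1 ≤ d) (hk : 1 ≤ k) (had : Nat.gcd a d = 1) :
    (¬ ∃ c : Fin (k + 1) → ℕ,
        a * ((a - 2) / k) + d * (a - 1) = ∑ i, c i * (a + (i : ℕ) * d)) ∧
      ∀ N : ℕ, a * ((a - 2) / k) + d * (a - 1) < N →
        ∃ c : Fin (k + 1) → ℕ, N = ∑ i, c i * (a + (i : ℕ) * d) := by
  constructor
  · rintro ⟨c, hc⟩
    obtain ⟨hsum, hle⟩ := decomp a d k c
    exact part1core a d k (∑ i, c i) (∑ i, c i * (i : ℕ)) ha hd hk had hle (hc.trans hsum)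
  · intro N hN
    obtain ⟨m, t, ht, hNe⟩ := part2core a d k N ha hd hk had hN
    obtain ⟨c, hc⟩ := rep_of a d k m t hk ht
    exact ⟨c, hNe.trans hc⟩
end

section
/- For coprime a, b ≥ 2, exactly half of the integers in {1, 2, ..., ab − a − b} are representable as nonnegative combinations of a and b; i.e., the number of nonrepresentable positive integers equals (a−1)(b−1)/2. -/
section Sylvester

variable {a b : ℕ}

private lemma exists_residue (hb : 0 < b) (hab : Nat.gcd a b = 1) (N : ℕ) :
    ∃ x : ℕ, x < b ∧ (b : ℤ) ∣ ((x : ℤ) * a - N) := by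
  haveI : NeZero b := ⟨by omega⟩
  have hu : IsUnit (a : ZMod b) := by
    rw [ZMod.isUnit_iff_coprime]; exact hab
  refine ⟨((N : ZMod b) * ↑hu.unit⁻¹).val, ZMod.val_lt _, ?_⟩
  rw [← ZMod.intCast_zmod_eq_zero_iff_dvd]
  push_cast
  rw [ZMod.natCast_val, ZMod.cast_id]
  have : (N : ZMod b) * ↑hu.unit⁻¹ * a = N := by
    rw [mul_assoc]
    have : (↑hu.unit⁻¹ : ZMod b) * a = 1 := by
      rw [mul_comm]
      exact hu.mul_val_inv  -- maybe wrong name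
    rw [this, mul_one]
  rw [this, sub_self]

private lemma rep_iff (hb : 0 < b) (hab : Nat.gcd a b = 1) {x N : ℕ}
    (hx : x < b) (hd : (b : ℤ) ∣ ((x : ℤ) * a - N)) :
    (∃ u v : ℕ, N = u * a + v * b) ↔ x * a ≤ N := by
  constructor
  · rintro ⟨u, v, rfl⟩
    have h1 : (b : ℤ) ∣ ((x : ℤ) - u) * a := by
      obtain ⟨k, hk⟩ := hd
      refine ⟨k + v, ?_⟩
      push_cast at hk ⊢
      linarith [hk]
    have hco : IsCoprime (b : ℤ) (a : ℤ) := by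
      rw [Int.isCoprime_iff_gcd_eq_one, Int.gcd_natCast_natCast, Nat.gcd_comm]
      exact hab
    have h2 : (b : ℤ) ∣ ((x : ℤ) - u) := hco.dvd_of_dvd_mul_right h1
    have hxu : x ≤ u := by
      by_contra hlt
      push_neg at hlt
      obtain ⟨k, hk⟩ := h2
      have hk1 : 1 ≤ k := by nlinarith [hk, (by exact_mod_cast hlt : (u:ℤ) < x)]
      have : (x : ℤ) < b := by exact_mod_cast hx
      nlinarith
    calc x * a ≤ u * a := Nat.mul_le_mul_right _ hxu
      _ ≤ u * a + v * b := Nat.le_add_right _ _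
  · intro hle
    obtain ⟨k, hk⟩ := hd
    have hk0 : k ≤ 0 := by
      have : (x : ℤ) * a ≤ N := by exact_mod_cast hle
      nlinarith [(by exact_mod_cast hb : (0:ℤ) < b)]
    refine ⟨x, (-k).toNat, ?_⟩
    have h3 : (N : ℤ) = (x : ℤ) * a + ((-k).toNat : ℤ) * b := by
      rw [Int.toNat_of_nonneg (by omega : (0:ℤ) ≤ -k)]
      linarith [hk]
    exact_mod_cast h3

end Sylvester

set_option maxHeartbeats 1600000 in
/-- Sylvester's count: for coprime `a, b ≥ 2`, the number of positive integers
in `{1, ..., ab − a − b}` that are not representable as nonnegative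
combinations of `a` and `b` equals `(a−1)(b−1)/2`, i.e. exactly half of them. -/
theorem sylvester_gap_count (a b : ℕ) (ha : 2 ≤ a) (hb : 2 ≤ b)
    (hab : Nat.gcd a b = 1) :
    Set.ncard {N : ℕ | 1 ≤ N ∧ N ≤ a * b - a - b ∧
        ¬ ∃ x y : ℕ, N = x * a + y * b} = (a - 1) * (b - 1) / 2 := by
  classical
  obtain ⟨a', rfl⟩ : ∃ a', a = a' + 2 := ⟨a - 2, by omega⟩
  obtain ⟨b', rfl⟩ : ∃ b', b = b' + 2 := ⟨b - 2, by omega⟩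
  set a := a' + 2 with haa
  set b := b' + 2 with hbb
  have ha0 : 0 < a := by omega
  have hb0 : 0 < b := by omega
  have hP : a * b = a' * b' + 2 * a' + 2 * b' + 4 := by rw [haa, hbb]; ring
  set F := a * b - a - b with hFdef
  have hF : F = a' * b' + a' + b' := by omega
  have hF1 : F + 1 = (a - 1) * (b - 1) := by
    have h1 : (a - 1) * (b - 1) = (a' + 1) * (b' + 1) := by simp [haa, hbb]
    have h2 : (a' + 1) * (b' + 1) = a' * b' + a' + b' + 1 := by ring
    omega
  have hFZ : (F : ℤ) = (a : ℤ) * b - a - b := by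
    simp only [hF, haa, hbb]; push_cast; ring
  set Rep : ℕ → Prop := fun N => ∃ x y : ℕ, N = x * a + y * b with hRep
  have key : ∀ N ≤ F, (Rep N ↔ ¬ Rep (F - N)) := by
    intro N hN
    obtain ⟨x, hx, hd⟩ := exists_residue hb0 hab N
    have hxb : x ≤ b - 1 := by omega
    have hd' : (b : ℤ) ∣ ((↑(b - 1 - x) : ℤ) * a - ↑(F - N)) := by
      obtain ⟨k, hk⟩ := hd
      refine ⟨1 - k, ?_⟩
      have e1 : ((b - 1 - x : ℕ) : ℤ) = (b : ℤ) - 1 - x := by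
        have : x ≤ b - 1 := hxb; push_cast [Nat.cast_sub (by omega : x ≤ b - 1), Nat.cast_sub (by omega : 1 ≤ b)]; ring
      have e2 : ((F - N : ℕ) : ℤ) = (F : ℤ) - N := by
        push_cast [Nat.cast_sub hN]; ring
      rw [e1, e2, hFZ]
      linear_combination -hk
    have h1 := rep_iff hb0 hab hx hd
    have h2 := rep_iff hb0 hab (by omega : b - 1 - x < b) hd'
    rw [hRep]
    simp only []
    rw [h1, h2]
    -- goal : x * a ≤ N ↔ ¬ (b-1-x) * a ≤ F - N
    have hcast : ((b - 1 - x) * a ≤ F - N) ↔ ((x : ℤ) * a ≥ (N : ℤ) + b) := by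
      constructor
      · intro h
        have h' : ((b - 1 - x : ℕ) : ℤ) * a ≤ ((F - N : ℕ) : ℤ) := by exact_mod_cast h
        rw [Nat.cast_sub hN] at h'
        have e1 : ((b - 1 - x : ℕ) : ℤ) = (b : ℤ) - 1 - x := by
          push_cast [Nat.cast_sub (by omega : x ≤ b - 1), Nat.cast_sub (by omega : 1 ≤ b)]; ring
        rw [e1, hFZ] at h'
        nlinarith
      · intro h
        have e1 : ((b - 1 - x : ℕ) : ℤ) = (b : ℤ) - 1 - x := by
          push_cast [Nat.cast_sub (by omega : x ≤ b - 1), Nat.cast_sub (by omega : 1 ≤ b)]; ring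
        have : ((b - 1 - x : ℕ) : ℤ) * a ≤ ((F - N : ℕ) : ℤ) := by
          rw [e1, Nat.cast_sub hN, hFZ]; nlinarith
        exact_mod_cast this
    rw [hcast]
    constructor
    · intro hle
      have : (x : ℤ) * a ≤ N := by exact_mod_cast hle
      have hbZ : (0 : ℤ) < b := by exact_mod_cast hb0
      intro hge; linarith
    · intro hnot
      by_contra hlt
      push_neg at hlt
      -- N < x * a, b ∣ x*a - N ⇒ x*a ≥ N + b
      obtain ⟨k, hk⟩ := hd
      have hNZ : (N : ℤ) < (x : ℤ) * a := by exact_mod_cast hlt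
      have hbZ : (0 : ℤ) < b := by exact_mod_cast hb0
      have hbk : 0 < (b : ℤ) * k := by linarith
      have hk1 : 1 ≤ k := by
        by_contra hkk
        push_neg at hkk
        have : (b : ℤ) * k ≤ 0 := mul_nonpos_of_nonneg_of_nonpos hbZ.le (by omega)
        linarith
      have : (b : ℤ) * 1 ≤ (b : ℤ) * k := mul_le_mul_of_nonneg_left hk1 hbZ.le
      exact hnot (by linarith)
  -- counting
  haveI : DecidablePred Rep := Classical.decPred _
  set A := (Finset.Icc 0 F).filter (fun N => ¬ Rep N) with hA
  set B := (Finset.Icc 0 F).filter Rep with hB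
  have hmemA : ∀ N, N ∈ A ↔ N ≤ F ∧ ¬ Rep N := by
    intro N; simp [hA, Finset.mem_filter, Finset.mem_Icc]
  have hmemB : ∀ N, N ∈ B ↔ N ≤ F ∧ Rep N := by
    intro N; simp [hB, Finset.mem_filter, Finset.mem_Icc]
  have hcardAB : A.card = B.card := by
    apply Finset.card_bij' (fun N _ => F - N) (fun N _ => F - N)
    · intro N hN
      rw [hmemA] at hN
      rw [hmemB]
      refine ⟨Nat.sub_le _ _, ?_⟩
      have := (key N hN.1).mpr.mt
      simp only [not_not] at this
      exact this hN.2
    · intro N hN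
      rw [hmemB] at hN
      rw [hmemA]
      refine ⟨Nat.sub_le _ _, fun hr => ?_⟩
      exact (key (F - N) (Nat.sub_le _ _)).mp hr (by rw [Nat.sub_sub_self hN.1]; exact hN.2)
    · intro N hN
      rw [hmemA] at hN
      omega
    · intro N hN
      rw [hmemB] at hN
      omega
  have hsum : A.card + B.card = F + 1 := by
    have := Finset.card_filter_add_card_filter_not (s := Finset.Icc 0 F) (p := Rep)
    rw [Nat.card_Icc, ← hA, ← hB] at this
    omega
  have hScard : A.card = (F + 1) / 2 := by omega
  have hset : {N : ℕ | 1 ≤ N ∧ N ≤ a * b - a - b ∧ ¬ ∃ x y : ℕ, N = x * a + y * b} = ↑A := by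
    ext N
    simp only [Set.mem_setOf_eq, Finset.coe_filter, hmemA, Finset.mem_coe]
    constructor
    · rintro ⟨h1, h2, h3⟩; exact ⟨h2, h3⟩
    · rintro ⟨h2, h3⟩
      refine ⟨?_, h2, h3⟩
      rcases Nat.eq_zero_or_pos N with h0 | h0
      · exact absurd ⟨0, 0, by simp [h0]⟩ h3
      · exact h0
  rw [hset, Set.ncard_coe_finset, hScard, hF1]
end

section
/- Let i, k ≥ 3 with gcd(F_i, F_{i+2}) = 1 and suppose r = ⌊(F_i − 1)/F_k⌋ = 0. Then g(F_i, F_{i+2}, F_{i+k}) = (F_i − 1)·F_{i+2} − F_i·(r·F_{k−2} + 1) = (F_i − 1)·F_{i+2} − F_i. -/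
/-- For `i, k ≥ 3` with `gcd(F_i, F_{i+2}) = 1` and `r = ⌊(F_i − 1)/F_k⌋ = 0`,
the Frobenius number of `F_i, F_{i+2}, F_{i+k}` equals `(F_i − 1)·F_{i+2} − F_i`. -/
theorem frobenius_fib_spaced (i k : ℕ) (hi : 3 ≤ i) (hk : 3 ≤ k)
    (hcop : Nat.gcd (Nat.fib i) (Nat.fib (i + 2)) = 1)
    (hgcd : Nat.gcd (Nat.fib i) (Nat.gcd (Nat.fib (i + 2)) (Nat.fib (i + k))) = 1)
    (hr : (Nat.fib i - 1) / Nat.fib k = 0) :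
    (¬ ∃ x y z : ℕ,
        (Nat.fib i - 1) * Nat.fib (i + 2) - Nat.fib i =
          x * Nat.fib i + y * Nat.fib (i + 2) + z * Nat.fib (i + k)) ∧
      ∀ N : ℕ, (Nat.fib i - 1) * Nat.fib (i + 2) - Nat.fib i < N →
        ∃ x y z : ℕ, N = x * Nat.fib i + y * Nat.fib (i + 2) + z * Nat.fib (i + k) := by
  set a := Nat.fib i with ha_def
  set b := Nat.fib (i + 2) with hb_def
  set c := Nat.fib (i + k) with hc_def
  have ha2 : 2 ≤ a := by
    calc 2 = Nat.fib 3 := by decide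
    _ ≤ a := Nat.fib_mono hi
  have hb2 : 2 ≤ b := by
    calc 2 = Nat.fib 3 := by decide
    _ ≤ b := Nat.fib_mono (by omega)
  have hab : a < b := by
    calc a < Nat.fib (i + 1) := Nat.fib_lt_fib_succ (by omega)
    _ < b := Nat.fib_lt_fib_succ (by omega)
  -- the target value equals a*b - a - b
  have hab1 : (a - 1) * b = a * b - b := Nat.sub_one_mul a b
  have habge : a + b ≤ a * b := Nat.add_le_mul ha2 hb2
  set G := (a - 1) * b - a with hG_def
  have hGab : G + a + b = a * b := by omega
  -- k ≥ i
  have hfk : a ≤ Nat.fib k := by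
    have h0 : 0 < Nat.fib k := Nat.fib_pos.2 (by omega)
    have := Nat.div_eq_zero_iff.1 hr
    omega
  have hki : i ≤ k := by
    by_contra h
    push_neg at h
    have h1 : Nat.fib (k + 1) ≤ a := Nat.fib_mono h
    have h2 : Nat.fib k < Nat.fib (k + 1) := Nat.fib_lt_fib_succ (by omega)
    omega
  constructor
  · rintro ⟨x, y, z, hxyz⟩
    -- in both cases we find w with z * c = a * w  (after possibly z = 0)
    have hzc : ∃ w, z * c = a * w := by
      rcases eq_or_lt_of_le hki with hik | hik
      · -- k = i : a ∣ c since fib i ∣ fib (2i)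
        have hd : a ∣ c := by
          rw [ha_def, hc_def, ← hik]
          exact Nat.fib_dvd i (i + i) ⟨2, by ring⟩
        rcases hd with ⟨d, hd⟩
        exact ⟨z * d, by rw [hd]; ring⟩
      · -- k ≥ i + 1 : c > G so z = 0
        have hc_big : a * b < c := by
          have h1 : Nat.fib (i + i + 1) ≤ c := Nat.fib_mono (by omega)
          have h2 : Nat.fib (i + i + 1) = a * a + Nat.fib (i + 1) * Nat.fib (i + 1) :=
            Nat.fib_add i i
          have h3 : b = a + Nat.fib (i + 1) := Nat.fib_add_two
          have h4 : a < Nat.fib (i + 1) := Nat.fib_lt_fib_succ (by omega)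
          nlinarith
        have hz0 : z = 0 := by
          rcases Nat.eq_zero_or_pos z with h | h
          · exact h
          · exfalso
            have : c ≤ z * c := Nat.le_mul_of_pos_left c h
            omega
        exact ⟨0, by simp [hz0]⟩
    rcases hzc with ⟨w, hw⟩
    -- a ∣ (y+1)*b
    have hsum : a * b = a * (x + w + 1) + (y + 1) * b := by
      have h1 : G = x * a + y * b + a * w := by rw [hxyz, hw]
      calc a * b = G + a + b := hGab.symm
        _ = a * (x + w + 1) + (y + 1) * b := by rw [h1]; ring
    have hdvd : a ∣ (y + 1) * b := by
      have h1 : a ∣ a * (x + w + 1) + (y + 1) * b := hsum ▸ dvd_mul_right a b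
      exact (Nat.dvd_add_right (dvd_mul_right a _)).1 h1
    have hy1 : a ∣ y + 1 := (Nat.Coprime.dvd_of_dvd_mul_right hcop) hdvd
    have hy : a - 1 ≤ y := by
      have := Nat.le_of_dvd (by omega) hy1
      omega
    have : (a - 1) * b ≤ y * b := Nat.mul_le_mul_right b hy
    have hybG : y * b ≤ G := by omega
    omega
  · intro N hN
    have hfrob := frobeniusNumber_pair hcop (by omega) (by omega)
    have hGeq : a * b - a - b = G := by omega
    rw [hGeq] at hfrob
    have hmem : N ∈ AddSubmonoid.closure ({a, b} : Set ℕ) := by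
      by_contra h
      exact absurd (hfrob.2 h) (by omega)
    rcases (AddSubmonoid.mem_closure_pair a b N).1 hmem with ⟨x, y, hxy⟩
    exact ⟨x, y, 0, by simpa [mul_comm] using hxy.symm⟩
end
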